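/- arXiv:1612.00191 — 2 statements merged into one kernel-verified Lean document; each statement's English description precedes it below -/
import Mathlib

section
/- Fix an integer n ≥ 1 and let F_n = {([x₀:x₁:x₂],[u:v]) ∈ ℙ²(ℝ)×ℙ¹(ℝ) : uⁿx₂ = vⁿx₁} be the n-th real Hirzebruch surface, with the two disjoint sections E_n = {x₁ = x₂ = 0} and s_n = {x₀ = 0}. Let P ∈ ℝ[u,v] be a nonzero homogeneous polynomial of degree 2n, and define the partial self-map φ([x₀:x₁:x₂],[u:v]) = ([x₁·P(u,v) : x₀u^{2n} : x₀uⁿvⁿ], [u:v]), defined where the first coordinate triple is nonzero. Then: (i) φ maps points of F_n to points of F_n; (ii) for every q = ([x₀:x₁:x₂],[u:v]) ∈ F_n with u ≠ 0, P(u,v) ≠ 0 and (x₀,x₁) ≠ (0,0), both applications are defined and φ(φ(q)) = q; (iii) φ maps every point of s_n with u ≠ 0 and P(u,v) ≠ 0 to a point of E_n, and maps every point of E_n with u ≠ 0 to a point of s_n. -/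
/-- The real Hirzebruch surface
`F_n = {([x₀:x₁:x₂],[u:v]) ∈ ℙ²(ℝ) × ℙ¹(ℝ) : uⁿx₂ = vⁿx₁}`. -/
def hirzebruchF (n : ℕ) :
    Set (Projectivization ℝ (Fin 3 → ℝ) × Projectivization ℝ (Fin 2 → ℝ)) :=
  {P | ∃ (x₀ x₁ x₂ u v : ℝ) (h1 : (![x₀, x₁, x₂] : Fin 3 → ℝ) ≠ 0)
      (h2 : (![u, v] : Fin 2 → ℝ) ≠ 0),
      P = (Projectivization.mk ℝ ![x₀, x₁, x₂] h1, Projectivization.mk ℝ ![u, v] h2) ∧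
      u ^ n * x₂ = v ^ n * x₁}

/-- The exceptional section `E_n = {x₁ = x₂ = 0}` of `F_n`. -/
def sectionE : Set (Projectivization ℝ (Fin 3 → ℝ) × Projectivization ℝ (Fin 2 → ℝ)) :=
  {P | ∃ (x₀ u v : ℝ) (h1 : (![x₀, 0, 0] : Fin 3 → ℝ) ≠ 0)
      (h2 : (![u, v] : Fin 2 → ℝ) ≠ 0),
      P = (Projectivization.mk ℝ ![x₀, 0, 0] h1, Projectivization.mk ℝ ![u, v] h2)}

/-- The section `s_n = {x₀ = 0}` of `F_n`, of self-intersection `n`. -/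
def sectionS (n : ℕ) :
    Set (Projectivization ℝ (Fin 3 → ℝ) × Projectivization ℝ (Fin 2 → ℝ)) :=
  {P | ∃ (x₁ x₂ u v : ℝ) (h1 : (![0, x₁, x₂] : Fin 3 → ℝ) ≠ 0)
      (h2 : (![u, v] : Fin 2 → ℝ) ≠ 0),
      P = (Projectivization.mk ℝ ![0, x₁, x₂] h1, Projectivization.mk ℝ ![u, v] h2) ∧
      u ^ n * x₂ = v ^ n * x₁}

/-- Evaluation of a polynomial `P ∈ ℝ[u,v]` at `(a,b)`. -/
noncomputable def evalP (P : MvPolynomial (Fin 2) ℝ) (a b : ℝ) : ℝ :=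
  MvPolynomial.eval ![a, b] P

lemma rel_of_mem_aux (n : ℕ) (x₀ x₁ x₂ u v : ℝ) (h1 : (![x₀, x₁, x₂] : Fin 3 → ℝ) ≠ 0)
    (h2 : (![u, v] : Fin 2 → ℝ) ≠ 0)
    (h : (Projectivization.mk ℝ ![x₀, x₁, x₂] h1, Projectivization.mk ℝ ![u, v] h2) ∈
      hirzebruchF n) : u ^ n * x₂ = v ^ n * x₁ := by
  obtain ⟨y₀, y₁, y₂, u', v', g1, g2, heq, hrel⟩ := h
  rw [Prod.ext_iff] at heq
  obtain ⟨ha, hb⟩ := heq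
  rw [Projectivization.mk_eq_mk_iff'] at ha hb
  obtain ⟨a, ha⟩ := ha
  obtain ⟨b, hb⟩ := hb
  have e1 : x₁ = a * y₁ := (congrFun ha 1).symm
  have e2 : x₂ = a * y₂ := (congrFun ha 2).symm
  have f0 : u = b * u' := (congrFun hb 0).symm
  have f1 : v = b * v' := (congrFun hb 1).symm
  subst e1 e2 f0 f1
  linear_combination a * b ^ n * hrel

/-- For `n ≥ 1` and a nonzero homogeneous `P` of degree `2n`, the partial self-map
`φ([x₀:x₁:x₂],[u:v]) = ([x₁·P(u,v) : x₀u^{2n} : x₀uⁿvⁿ], [u:v])` of `ℙ² × ℙ¹` satisfies: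
(i) it maps points of `F_n` to points of `F_n`;
(ii) for every point of `F_n` with `u ≠ 0`, `P(u,v) ≠ 0` and `(x₀,x₁) ≠ (0,0)`, both
applications are defined and `φ(φ(q)) = q`;
(iii) it maps points of `s_n` with `u ≠ 0`, `P(u,v) ≠ 0` to points of `E_n`, and points of
`E_n` with `u ≠ 0` to points of `s_n`. -/
theorem stmt_9 (n : ℕ) (hn : 1 ≤ n) (P : MvPolynomial (Fin 2) ℝ) (hP : P ≠ 0)
    (hhom : P.IsHomogeneous (2 * n)) :
    -- (i)
    (∀ (x₀ x₁ x₂ u v : ℝ) (h1 : (![x₀, x₁, x₂] : Fin 3 → ℝ) ≠ 0)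
        (h2 : (![u, v] : Fin 2 → ℝ) ≠ 0)
        (h3 : (![x₁ * evalP P u v, x₀ * u ^ (2 * n), x₀ * (u ^ n * v ^ n)] :
          Fin 3 → ℝ) ≠ 0),
      (Projectivization.mk ℝ ![x₀, x₁, x₂] h1, Projectivization.mk ℝ ![u, v] h2) ∈
        hirzebruchF n →
      (Projectivization.mk ℝ ![x₁ * evalP P u v, x₀ * u ^ (2 * n), x₀ * (u ^ n * v ^ n)] h3,
        Projectivization.mk ℝ ![u, v] h2) ∈ hirzebruchF n) ∧
    -- (ii)
    (∀ (x₀ x₁ x₂ u v : ℝ) (h1 : (![x₀, x₁, x₂] : Fin 3 → ℝ) ≠ 0)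
        (h2 : (![u, v] : Fin 2 → ℝ) ≠ 0),
      (Projectivization.mk ℝ ![x₀, x₁, x₂] h1, Projectivization.mk ℝ ![u, v] h2) ∈
        hirzebruchF n →
      u ≠ 0 → evalP P u v ≠ 0 → ¬(x₀ = 0 ∧ x₁ = 0) →
      (![x₁ * evalP P u v, x₀ * u ^ (2 * n), x₀ * (u ^ n * v ^ n)] : Fin 3 → ℝ) ≠ 0 ∧
      (![(x₀ * u ^ (2 * n)) * evalP P u v, (x₁ * evalP P u v) * u ^ (2 * n),
        (x₁ * evalP P u v) * (u ^ n * v ^ n)] : Fin 3 → ℝ) ≠ 0 ∧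
      ∀ hk : (![(x₀ * u ^ (2 * n)) * evalP P u v, (x₁ * evalP P u v) * u ^ (2 * n),
          (x₁ * evalP P u v) * (u ^ n * v ^ n)] : Fin 3 → ℝ) ≠ 0,
        Projectivization.mk ℝ ![(x₀ * u ^ (2 * n)) * evalP P u v,
            (x₁ * evalP P u v) * u ^ (2 * n), (x₁ * evalP P u v) * (u ^ n * v ^ n)] hk =
          Projectivization.mk ℝ ![x₀, x₁, x₂] h1) ∧
    -- (iii) s_n goes to E_n
    (∀ (x₁ x₂ u v : ℝ) (h1 : (![0, x₁, x₂] : Fin 3 → ℝ) ≠ 0)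
        (h2 : (![u, v] : Fin 2 → ℝ) ≠ 0),
      u ^ n * x₂ = v ^ n * x₁ → u ≠ 0 → evalP P u v ≠ 0 →
      ∃ h3 : (![x₁ * evalP P u v, 0 * u ^ (2 * n), 0 * (u ^ n * v ^ n)] : Fin 3 → ℝ) ≠ 0,
        (Projectivization.mk ℝ
            ![x₁ * evalP P u v, 0 * u ^ (2 * n), 0 * (u ^ n * v ^ n)] h3,
          Projectivization.mk ℝ ![u, v] h2) ∈ sectionE) ∧
    -- (iii) E_n goes to s_n
    (∀ (x₀ u v : ℝ) (h1 : (![x₀, 0, 0] : Fin 3 → ℝ) ≠ 0)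
        (h2 : (![u, v] : Fin 2 → ℝ) ≠ 0),
      u ≠ 0 →
      ∃ h3 : (![0 * evalP P u v, x₀ * u ^ (2 * n), x₀ * (u ^ n * v ^ n)] : Fin 3 → ℝ) ≠ 0,
        (Projectivization.mk ℝ
            ![0 * evalP P u v, x₀ * u ^ (2 * n), x₀ * (u ^ n * v ^ n)] h3,
          Projectivization.mk ℝ ![u, v] h2) ∈ sectionS n) := by
  refine ⟨?_, ?_, ?_, ?_⟩
  · -- (i)
    intro x₀ x₁ x₂ u v h1 h2 h3 _
    exact ⟨_, _, _, _, _, h3, h2, rfl, by ring⟩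
  · -- (ii)
    intro x₀ x₁ x₂ u v h1 h2 hmem hu hPv hx01
    have hrel := rel_of_mem_aux n x₀ x₁ x₂ u v h1 h2 hmem
    have key : x₀ ≠ 0 ∨ x₁ ≠ 0 := by
      by_cases h : x₀ = 0
      · exact Or.inr fun h' => hx01 ⟨h, h'⟩
      · exact Or.inl h
    have hun : u ^ (2 * n) ≠ 0 := pow_ne_zero _ hu
    have goal1 : (![x₁ * evalP P u v, x₀ * u ^ (2 * n), x₀ * (u ^ n * v ^ n)] :
        Fin 3 → ℝ) ≠ 0 := by
      intro hz
      rcases key with h | h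
      · exact mul_ne_zero h hun (congrFun hz 1)
      · exact mul_ne_zero h hPv (congrFun hz 0)
    have goal2 : (![(x₀ * u ^ (2 * n)) * evalP P u v, (x₁ * evalP P u v) * u ^ (2 * n),
        (x₁ * evalP P u v) * (u ^ n * v ^ n)] : Fin 3 → ℝ) ≠ 0 := by
      intro hz
      rcases key with h | h
      · exact mul_ne_zero (mul_ne_zero h hun) hPv (congrFun hz 0)
      · exact mul_ne_zero (mul_ne_zero h hPv) hun (congrFun hz 1)
    refine ⟨goal1, goal2, fun hk => ?_⟩
    rw [Projectivization.mk_eq_mk_iff']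
    refine ⟨u ^ (2 * n) * evalP P u v, ?_⟩
    funext i
    fin_cases i
    · simp; ring
    · simp; ring
    · simp
      linear_combination evalP P u v * u ^ n * hrel
  · -- (iii) s to E
    intro x₁ x₂ u v h1 h2 hrel hu hPv
    have hx₁ : x₁ ≠ 0 := by
      intro h
      have hx₂ : x₂ = 0 := by
        have := hrel
        rw [h, mul_zero] at this
        exact (mul_eq_zero.mp this).resolve_left (pow_ne_zero _ hu)
      exact h1 (by funext i; fin_cases i <;> simp [h, hx₂])
    have hne : x₁ * evalP P u v ≠ 0 := mul_ne_zero hx₁ hPv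
    have h3 : (![x₁ * evalP P u v, 0 * u ^ (2 * n), 0 * (u ^ n * v ^ n)] :
        Fin 3 → ℝ) ≠ 0 := fun hz => hne (congrFun hz 0)
    refine ⟨h3, x₁ * evalP P u v, u, v, ?_, h2, ?_⟩
    · intro hz; exact hne (congrFun hz 0)
    · refine Prod.ext ?_ rfl
      rw [Projectivization.mk_eq_mk_iff']
      exact ⟨1, by funext i; fin_cases i <;> simp⟩
  · -- (iii) E to s
    intro x₀ u v h1 h2 hu
    have hx₀ : x₀ ≠ 0 := by
      intro h
      exact h1 (by funext i; fin_cases i <;> simp [h])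
    have hne : x₀ * u ^ (2 * n) ≠ 0 := mul_ne_zero hx₀ (pow_ne_zero _ hu)
    have h3 : (![0 * evalP P u v, x₀ * u ^ (2 * n), x₀ * (u ^ n * v ^ n)] :
        Fin 3 → ℝ) ≠ 0 := fun hz => hne (congrFun hz 1)
    refine ⟨h3, x₀ * u ^ (2 * n), x₀ * (u ^ n * v ^ n), u, v, ?_, h2, ?_, by ring⟩
    · intro hz; exact hne (congrFun hz 1)
    · refine Prod.ext ?_ rfl
      rw [Projectivization.mk_eq_mk_iff']
      exact ⟨1, by funext i; fin_cases i <;> simp⟩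
end

section
/- Let Z₂ = {([w:x:y:z],[u:v]) ∈ ℙ³(ℂ)×ℙ¹(ℂ) : wz = x²+y², uz = vw}, let π: Z₂ → ℙ¹ be the projection ([w:x:y:z],[u:v]) ↦ [u:v], and let Z₂(ℝ) be the set of points admitting a representative with all coordinates real. Then π(Z₂(ℝ)) = {[t:1] : t ∈ ℝ, t ≥ 0} ∪ {[1:0]} ⊂ ℙ¹(ℝ); that is, a point [u:v] ∈ ℙ¹(ℝ) is the image of a real point of Z₂ if and only if uv ≥ 0. -/
/-- The surface `Z₂ = {([w:x:y:z],[u:v]) ∈ ℙ³(ℂ) × ℙ¹(ℂ) : wz = x² + y², uz = vw}`. -/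
def Z2C : Set (Projectivization ℂ (Fin 4 → ℂ) × Projectivization ℂ (Fin 2 → ℂ)) :=
  {P | ∃ (w x y z u v : ℂ) (h1 : (![w, x, y, z] : Fin 4 → ℂ) ≠ 0)
      (h2 : (![u, v] : Fin 2 → ℂ) ≠ 0),
      P = (Projectivization.mk ℂ ![w, x, y, z] h1, Projectivization.mk ℂ ![u, v] h2) ∧
      w * z = x ^ 2 + y ^ 2 ∧ u * z = v * w}

/-- The real points `Z₂(ℝ)` of `Z₂`: the points admitting a representative with all
coordinates real. -/
def Z2Real : Set (Projectivization ℂ (Fin 4 → ℂ) × Projectivization ℂ (Fin 2 → ℂ)) :=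
  {P | P ∈ Z2C ∧ ∃ (w x y z u v : ℝ) (h1 : (![(w : ℂ), x, y, z] : Fin 4 → ℂ) ≠ 0)
      (h2 : (![(u : ℂ), (v : ℂ)] : Fin 2 → ℂ) ≠ 0),
      P = (Projectivization.mk ℂ ![(w : ℂ), x, y, z] h1,
        Projectivization.mk ℂ ![(u : ℂ), (v : ℂ)] h2)}

private lemma mk_congr {K V : Type*} [DivisionRing K] [AddCommGroup V] [Module K V]
    {v w : V} (h : v = w) (hv : v ≠ 0) (hw : w ≠ 0) :
    Projectivization.mk K v hv = Projectivization.mk K w hw := by subst h; rfl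

private lemma vec2_zero (a b : ℂ) : (![a,b] : Fin 2 → ℂ) = 0 ↔ a = 0 ∧ b = 0 := by
  simp [Matrix.cons_eq_zero_iff]

private lemma vec4_zero (a b c d : ℂ) :
    (![a,b,c,d] : Fin 4 → ℂ) = 0 ↔ a = 0 ∧ b = 0 ∧ c = 0 ∧ d = 0 := by
  simp [Matrix.cons_eq_zero_iff]

private lemma vec2_ne {a b : ℂ} (h : ¬(a = 0 ∧ b = 0)) : (![a,b] : Fin 2 → ℂ) ≠ 0 :=
  fun hh => h ((vec2_zero a b).1 hh)

private lemma vec4_ne {a b c d : ℂ} (h : ¬(a = 0 ∧ b = 0 ∧ c = 0 ∧ d = 0)) :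
    (![a,b,c,d] : Fin 4 → ℂ) ≠ 0 :=
  fun hh => h ((vec4_zero a b c d).1 hh)

private lemma smul2 {c a b A B : ℂ} (h : c • (![a,b] : Fin 2 → ℂ) = ![A,B]) :
    c * a = A ∧ c * b = B :=
  ⟨by simpa using congrFun h 0, by simpa using congrFun h 1⟩

private lemma smul4 {c a b a' b' A B A' B' : ℂ}
    (h : c • (![a,b,a',b'] : Fin 4 → ℂ) = ![A,B,A',B']) :
    c * a = A ∧ c * b = B ∧ c * a' = A' ∧ c * b' = B' :=
  ⟨by simpa using congrFun h 0, by simpa using congrFun h 1,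
   by simpa using congrFun h 2, by simpa using congrFun h 3⟩

open Projectivization in
private lemma key_iff (u v : ℝ) (h2 : (![(u : ℂ), (v : ℂ)] : Fin 2 → ℂ) ≠ 0) :
    (∃ q, (q, Projectivization.mk ℂ ![(u : ℂ), (v : ℂ)] h2) ∈ Z2Real) ↔ 0 ≤ u * v := by
  have huv0 : ¬ (u = 0 ∧ v = 0) := by
    rintro ⟨rfl, rfl⟩; exact h2 (by rw [vec2_zero]; norm_num)
  constructor
  · rintro ⟨q, hC, w' , x', y', z', u', v', h1', h2', hpair⟩
    obtain ⟨W, X, Y, Z, U, V, hW, hUV, hpairC, heq1, heq2⟩ := hC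
    rw [Prod.ext_iff] at hpair hpairC
    obtain ⟨hq1, hr1⟩ := hpair
    obtain ⟨hq2, hr2⟩ := hpairC
    have hmk4 : Projectivization.mk ℂ ![(w':ℂ), x', y', z'] h1' =
        Projectivization.mk ℂ ![W, X, Y, Z] hW := by
      simp only at hq1 hq2; rw [← hq1, hq2]
    have hmk2 : Projectivization.mk ℂ ![(u':ℂ), (v':ℂ)] h2' =
        Projectivization.mk ℂ ![U, V] hUV := by
      simp only at hr1 hr2; rw [← hr1, hr2]
    obtain ⟨b, hb⟩ := (mk_eq_mk_iff ℂ _ _ hW h1').1 hmk4.symm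
    obtain ⟨a, ha⟩ := (mk_eq_mk_iff ℂ _ _ hUV h2').1 hmk2.symm
    obtain ⟨hbw, hbx, hby, hbz⟩ := smul4 hb
    obtain ⟨hau, hav⟩ := smul2 ha
    rw [← hbw, ← hbx, ← hby, ← hbz] at heq1
    rw [← hau, ← hav, ← hbz, ← hbw] at heq2
    have hC1 : (w' : ℂ) * z' = (x':ℂ)^2 + (y':ℂ)^2 := by
      have h : (b:ℂ)^2 * ((w':ℂ) * z') = (b:ℂ)^2 * ((x':ℂ)^2 + (y':ℂ)^2) := by
        linear_combination heq1
      exact mul_left_cancel₀ (pow_ne_zero 2 b.ne_zero) h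
    have hC2 : (u' : ℂ) * z' = (v':ℂ) * w' := by
      have h : ((a:ℂ) * b) * ((u':ℂ) * z') = ((a:ℂ) * b) * ((v':ℂ) * w') := by
        linear_combination heq2
      exact mul_left_cancel₀ (mul_ne_zero a.ne_zero b.ne_zero) h
    have hR1 : w' * z' = x'^2 + y'^2 := by exact_mod_cast hC1
    have hR2 : u' * z' = v' * w' := by exact_mod_cast hC2
    have h4ne : ¬ (w' = 0 ∧ x' = 0 ∧ y' = 0 ∧ z' = 0) := by
      rintro ⟨rfl, rfl, rfl, rfl⟩; exact h1' (by rw [vec4_zero]; norm_num)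
    have h2ne : ¬ (u' = 0 ∧ v' = 0) := by
      rintro ⟨rfl, rfl⟩; exact h2' (by rw [vec2_zero]; norm_num)
    have huv' : 0 ≤ u' * v' := by
      by_cases hz : z' = 0
      · subst hz
        have hx : x' = 0 := by nlinarith [sq_nonneg x', sq_nonneg y']
        have hy : y' = 0 := by nlinarith [sq_nonneg x', sq_nonneg y']
        have hw : w' ≠ 0 := fun hw => h4ne ⟨hw, hx, hy, rfl⟩
        have hv' : v' = 0 := by
          have h : v' * w' = 0 := by linarith [hR2]
          exact (mul_eq_zero.1 h).resolve_right hw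
        simp [hv']
      · have key : u' * v' * z'^2 = v'^2 * (x'^2 + y'^2) := by
          linear_combination v' * z' * hR2 + v'^2 * hR1
        nlinarith [sq_nonneg (v' * x'), sq_nonneg (v' * y'), sq_pos_of_ne_zero hz]
    have hmkuv : Projectivization.mk ℂ ![(u:ℂ), (v:ℂ)] h2 =
        Projectivization.mk ℂ ![(u':ℂ), (v':ℂ)] h2' := hr1
    obtain ⟨c, hc⟩ := (mk_eq_mk_iff ℂ _ _ h2 h2').1 hmkuv
    obtain ⟨hcu, hcv⟩ := smul2 hc
    have hcross : (v : ℂ) * u' = (u : ℂ) * v' := by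
      rw [← hcu, ← hcv]; ring
    have hcrossR : v * u' = u * v' := by exact_mod_cast hcross
    rcases lt_or_eq_of_le huv' with hpos | hzero
    · have hsq : u * v * (u' * v') = (u * v')^2 := by
        linear_combination u * v' * hcrossR
      nlinarith [sq_nonneg (u * v')]
    · rcases mul_eq_zero.1 hzero.symm with hu' | hv'
      · have hvne : v' ≠ 0 := fun h => h2ne ⟨hu', h⟩
        have hu : u = 0 := by
          have h : u * v' = 0 := by rw [← hcrossR, hu']; ring
          exact (mul_eq_zero.1 h).resolve_right hvne
        simp [hu]
      · have hune : u' ≠ 0 := fun h => h2ne ⟨h, hv'⟩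
        have hv : v = 0 := by
          have h : v * u' = 0 := by rw [hcrossR, hv']; ring
          exact (mul_eq_zero.1 h).resolve_right hune
        simp [hv]
  · intro huv
    have hq4 : (![(u:ℂ), ((Real.sqrt (u*v) : ℝ):ℂ), ((0:ℝ):ℂ), (v:ℂ)] : Fin 4 → ℂ) ≠ 0 := by
      refine vec4_ne ?_
      rintro ⟨h1, -, -, h4⟩
      exact huv0 ⟨by exact_mod_cast h1, by exact_mod_cast h4⟩
    refine ⟨Projectivization.mk ℂ _ hq4, ?_, ?_⟩
    · refine ⟨(u:ℂ), ((Real.sqrt (u*v) : ℝ):ℂ), ((0:ℝ):ℂ), (v:ℂ), (u:ℂ), (v:ℂ),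
        hq4, h2, rfl, ?_, by ring⟩
      have hr : u * v = (Real.sqrt (u*v))^2 + (0:ℝ)^2 := by
        rw [Real.sq_sqrt huv]; ring
      exact_mod_cast hr
    · exact ⟨u, Real.sqrt (u*v), 0, v, u, v, hq4, h2, rfl⟩

/-- The image of the set of real points of `Z₂` under the projection
`π : ([w:x:y:z],[u:v]) ↦ [u:v]` is the interval `[0,∞] = {[t:1] : t ≥ 0} ∪ {[1:0]}` of the
real projective line; that is, a real point `[u:v]` of `ℙ¹` is the image of a real point of
`Z₂` if and only if `uv ≥ 0`. -/
theorem stmt_16 :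
    ({r : Projectivization ℂ (Fin 2 → ℂ) | ∃ q, (q, r) ∈ Z2Real} =
      {r | ∃ t : ℝ, 0 ≤ t ∧ ∃ h : (![(t : ℂ), 1] : Fin 2 → ℂ) ≠ 0,
          r = Projectivization.mk ℂ ![(t : ℂ), 1] h} ∪
        {r | ∃ h : (![1, 0] : Fin 2 → ℂ) ≠ 0, r = Projectivization.mk ℂ ![1, 0] h}) ∧
    ∀ (u v : ℝ) (h2 : (![(u : ℂ), (v : ℂ)] : Fin 2 → ℂ) ≠ 0),
      ((∃ q, (q, Projectivization.mk ℂ ![(u : ℂ), (v : ℂ)] h2) ∈ Z2Real) ↔ 0 ≤ u * v) := by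
  constructor
  · ext r
    simp only [Set.mem_setOf_eq, Set.mem_union]
    constructor
    · rintro ⟨q, hmem⟩
      obtain ⟨hC, w', x', y', z', u', v', h1', h2', hpair⟩ := hmem
      injection hpair with hq1 hr1
      subst hr1
      have huv : 0 ≤ u' * v' :=
        (key_iff u' v' h2').1
          ⟨q, hC, w', x', y', z', u', v', h1', h2', by rw [Prod.ext_iff]; exact ⟨hq1, rfl⟩⟩
      by_cases hv : v' = 0
      · right
        have hu : u' ≠ 0 := by
          intro h
          exact h2' (by rw [vec2_zero]; exact ⟨by exact_mod_cast h, by exact_mod_cast hv⟩)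
        have hne : (![1, 0] : Fin 2 → ℂ) ≠ 0 := vec2_ne (by norm_num)
        refine ⟨hne, ?_⟩
        rw [Projectivization.mk_eq_mk_iff' ℂ _ _ h2' hne]
        refine ⟨(u':ℂ), ?_⟩
        funext i
        fin_cases i <;> simp [hv]
      · left
        have hne : (![((u'/v' : ℝ):ℂ), 1] : Fin 2 → ℂ) ≠ 0 := vec2_ne (by norm_num)
        refine ⟨u' / v', ?_, hne, ?_⟩
        · have h : u' / v' = (u' * v') / v'^2 := by field_simp
          rw [h]; exact div_nonneg huv (sq_nonneg _)
        · rw [Projectivization.mk_eq_mk_iff' ℂ _ _ h2' hne]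
          refine ⟨(v':ℂ), ?_⟩
          have hvC : (v':ℂ) ≠ 0 := by exact_mod_cast hv
          funext i
          fin_cases i
          · show (v':ℂ) * ((u'/v' : ℝ):ℂ) = (u':ℂ)
            push_cast
            field_simp
          · show (v':ℂ) * 1 = (v':ℂ)
            ring
    · rintro (⟨t, ht, h, rfl⟩ | ⟨h, rfl⟩)
      · have h2 : (![(t:ℂ), ((1:ℝ):ℂ)] : Fin 2 → ℂ) ≠ 0 := vec2_ne (by norm_num)
        obtain ⟨q, hq⟩ := (key_iff t 1 h2).2 (by linarith)
        refine ⟨q, ?_⟩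
        have he : Projectivization.mk ℂ ![(t:ℂ), ((1:ℝ):ℂ)] h2 =
            Projectivization.mk ℂ ![(t:ℂ), 1] h := mk_congr (by norm_num) _ _
        rwa [he] at hq
      · have h2 : (![((1:ℝ):ℂ), ((0:ℝ):ℂ)] : Fin 2 → ℂ) ≠ 0 := vec2_ne (by norm_num)
        obtain ⟨q, hq⟩ := (key_iff 1 0 h2).2 (by norm_num)
        refine ⟨q, ?_⟩
        have he : Projectivization.mk ℂ ![((1:ℝ):ℂ), ((0:ℝ):ℂ)] h2 =
            Projectivization.mk ℂ ![1, 0] h := mk_congr (by norm_num) _ _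
        rwa [he] at hq
  · exact key_iff
end
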